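/- A tensor function Φ: M → Sym(n) on an isotropic set M is coaxial if and only if there exist scalar-valued functions γ₀,…,γ_{n−1} on M with Φ(X) = γ₀(X) I + γ₁(X) X + ⋯ + γ_{n−1}(X) X^{n−1} for all X ∈ M. -/

import Mathlib

open Matrix Polynomial

def IsEigenvector {n : ℕ} (A : Matrix (Fin n) (Fin n) ℝ) (v : Fin n → ℝ) : Prop :=
  v ≠ 0 ∧ ∃ μ : ℝ, A.mulVec v = μ • v

/-- `A` is coaxial to `B`: every eigenvector of `A` is an eigenvector of `B`. -/
def Coaxial {n : ℕ} (A B : Matrix (Fin n) (Fin n) ℝ) : Prop :=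
  ∀ v : Fin n → ℝ, IsEigenvector A v → IsEigenvector B v

/-- A matrix is orthogonal. -/
def IsOrthogonal {n : ℕ} (Q : Matrix (Fin n) (Fin n) ℝ) : Prop :=
  Q * Qᵀ = 1 ∧ Qᵀ * Q = 1

lemma pow_mulVec_aux {n : ℕ} (X : Matrix (Fin n) (Fin n) ℝ) {v : Fin n → ℝ} {μ : ℝ}
    (h : X *ᵥ v = μ • v) (k : ℕ) : (X ^ k) *ᵥ v = μ ^ k • v := by
  induction k with
  | zero => simp [Matrix.one_mulVec]
  | succ k ih =>
      rw [pow_succ, ← Matrix.mulVec_mulVec, h, Matrix.mulVec_smul, ih, smul_smul, mul_comm, ← pow_succ]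

lemma aeval_mulVec_aux {n : ℕ} (X : Matrix (Fin n) (Fin n) ℝ) {v : Fin n → ℝ} {μ : ℝ}
    (h : X *ᵥ v = μ • v) (p : Polynomial ℝ) :
    (Polynomial.aeval X p) *ᵥ v = p.eval μ • v := by
  induction p using Polynomial.induction_on' with
  | add p q hp hq => simp [map_add, Matrix.add_mulVec, hp, hq, add_smul]
  | monomial k a =>
      rw [Polynomial.aeval_monomial, Polynomial.eval_monomial,
        Algebra.algebraMap_eq_smul_one, smul_mul_assoc, one_mul,
        Matrix.smul_mulVec, pow_mulVec_aux X h k, smul_smul]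

lemma sum_mulVec_aux {n : ℕ} {ι : Type*} (s : Finset ι) (A : ι → Matrix (Fin n) (Fin n) ℝ)
    (v : Fin n → ℝ) : (∑ k ∈ s, A k) *ᵥ v = ∑ k ∈ s, A k *ᵥ v := by
  ext i
  simp [Matrix.mulVec, dotProduct, Matrix.sum_apply, Finset.sum_mul]
  rw [Finset.sum_comm]

lemma key_aux {n : ℕ} (hn : 0 < n) (X B : Matrix (Fin n) (Fin n) ℝ)
    (hX : X.IsHermitian) (coax : Coaxial X B) :
    ∃ c : Fin n → ℝ, B = ∑ k : Fin n, c k • X ^ (k : ℕ) := by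
  classical
  set b := hX.eigenvectorBasis with hb
  set μ := hX.eigenvalues with hμ
  -- orthonormality in dotProduct form
  have horth : ∀ i j, (⇑(b i) : Fin n → ℝ) ⬝ᵥ ⇑(b j) = if i = j then 1 else 0 := by
    intro i j
    have h := orthonormal_iff_ite.mp b.orthonormal i j
    simpa [PiLp.inner_apply, dotProduct, RCLike.inner_apply, conj_trivial, mul_comm] using h
  have hvne : ∀ i, (⇑(b i) : Fin n → ℝ) ≠ 0 := by
    intro i hzero
    have := horth i i
    rw [hzero] at this
    simp at this
  -- eigenvector of X
  have hXv : ∀ i, X *ᵥ ⇑(b i) = μ i • ⇑(b i) := fun i => hX.mulVec_eigenvectorBasis i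
  -- eigenvalue of B on each basis vector
  have hBev : ∀ i, ∃ ν : ℝ, B *ᵥ ⇑(b i) = ν • ⇑(b i) := by
    intro i
    exact (coax _ ⟨hvne i, μ i, hXv i⟩).2
  choose ν hν using hBev
  -- well-definedness
  have hwd : ∀ i j, μ i = μ j → ν i = ν j := by
    intro i j hij
    by_cases hijne : i = j
    · rw [hijne]
    -- v_i + v_j is an eigenvector of X
    have hsum_ne : (⇑(b i) + ⇑(b j) : Fin n → ℝ) ≠ 0 := by
      intro hz
      have : (⇑(b i) : Fin n → ℝ) ⬝ᵥ (⇑(b i) + ⇑(b j)) = 0 := by rw [hz, dotProduct_zero]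
      rw [dotProduct_add, horth i i, horth i j, if_pos rfl, if_neg hijne] at this
      norm_num at this
    have hXsum : X *ᵥ (⇑(b i) + ⇑(b j)) = μ i • (⇑(b i) + ⇑(b j)) := by
      rw [Matrix.mulVec_add, hXv i, hXv j, ← hij, smul_add]
    obtain ⟨-, lam, hlam⟩ := coax _ ⟨hsum_ne, μ i, hXsum⟩
    rw [Matrix.mulVec_add, hν i, hν j, smul_add] at hlam
    -- dot with b i : ν i = lam ; dot with b j : ν j = lam
    have hdi := congrArg (fun w => (⇑(b i) : Fin n → ℝ) ⬝ᵥ w) hlam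
    have hdj := congrArg (fun w => (⇑(b j) : Fin n → ℝ) ⬝ᵥ w) hlam
    simp [dotProduct_add, dotProduct_smul, horth, hijne, Ne.symm hijne] at hdi hdj
    rw [hdi, hdj]
  -- interpolating function
  set f : ℝ → ℝ := fun t => if h : ∃ i, μ i = t then ν h.choose else 0 with hf
  have hfμ : ∀ i, f (μ i) = ν i := by
    intro i
    have hex : ∃ j, μ j = μ i := ⟨i, rfl⟩
    rw [hf]
    simp only [dif_pos hex]
    exact hwd _ _ hex.choose_spec
  -- Lagrange interpolation
  set s : Finset ℝ := Finset.image μ Finset.univ with hs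
  set p : Polynomial ℝ := Lagrange.interpolate s id f with hp
  have hinj : Set.InjOn id (s : Set ℝ) := Function.injective_id.injOn
  have hdeg : p.degree < s.card := Lagrange.degree_interpolate_lt f hinj
  have hcard : s.card ≤ n := by
    calc s.card ≤ Finset.univ.card := Finset.card_image_le
    _ = n := by simp
  have hnat : p.natDegree < n := by
    by_cases hp0 : p = 0
    · rw [hp0]; simpa using hn
    · rw [Polynomial.natDegree_lt_iff_degree_lt hp0]
      exact lt_of_lt_of_le hdeg (by exact_mod_cast hcard)
  have hevalp : ∀ i, p.eval (μ i) = ν i := by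
    intro i
    have hmem : μ i ∈ s := Finset.mem_image_of_mem μ (Finset.mem_univ i)
    have := Lagrange.eval_interpolate_at_node f hinj hmem
    rw [id] at this
    rw [hp, this, hfμ]
  -- B = aeval X p
  have hB : B = Polynomial.aeval X p := by
    have hb' : ∀ i, B *ᵥ ⇑(b i) = (Polynomial.aeval X p) *ᵥ ⇑(b i) := by
      intro i
      rw [hν i, aeval_mulVec_aux X (hXv i) p, hevalp i]
    -- matrices agree on a basis
    apply Matrix.toLin'.injective
    apply (b.toBasis.map (WithLp.linearEquiv 2 ℝ (Fin n → ℝ))).ext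
    intro i
    simp only [Module.Basis.map_apply, Matrix.toLin'_apply]
    have hbi : (WithLp.linearEquiv 2 ℝ (Fin n → ℝ)) (b.toBasis i) = ⇑(b i) := by
      simp [WithLp.linearEquiv, OrthonormalBasis.coe_toBasis]
    rw [hbi, hb' i]
  refine ⟨fun k => p.coeff k, ?_⟩
  rw [hB, Polynomial.aeval_eq_sum_range' hnat, ← Fin.sum_univ_eq_sum_range]

/-- A tensor function Φ : M → Sym(n) on an isotropic set
M ⊂ Sym(n) is coaxial iff there are scalar-valued functions γ₀,…,γ_{n−1}
with Φ(X) = ∑_{k=0}^{n-1} γₖ(X) Xᵏ for all X ∈ M. -/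
theorem coaxial_iff_polynomial_representation {n : ℕ}
    (M : Set (Matrix (Fin n) (Fin n) ℝ))
    (hMsym : ∀ X ∈ M, X.IsSymm)
    (hMiso : ∀ X ∈ M, ∀ Q : Matrix (Fin n) (Fin n) ℝ, IsOrthogonal Q →
      Qᵀ * X * Q ∈ M)
    (Φ : Matrix (Fin n) (Fin n) ℝ → Matrix (Fin n) (Fin n) ℝ)
    (hΦsym : ∀ X ∈ M, (Φ X).IsSymm) :
    (∀ X ∈ M, Coaxial X (Φ X)) ↔
    (∃ γ : Fin n → (Matrix (Fin n) (Fin n) ℝ → ℝ),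
      ∀ X ∈ M, Φ X = ∑ k : Fin n, γ k X • X ^ (k : ℕ)) := by
  classical
  constructor
  · intro hcoax
    rcases Nat.eq_zero_or_pos n with hn0 | hn
    · refine ⟨fun _ _ => 0, fun X hX => ?_⟩
      subst hn0
      ext i j
      exact i.elim0
    · have herm : ∀ X ∈ M, X.IsHermitian := by
        intro X hX
        have hs := hMsym X hX
        rw [Matrix.IsHermitian, Matrix.conjTranspose]
        ext i j
        simpa using congrFun (congrFun hs i) j
      refine ⟨fun k X => if h : X ∈ M then
        Classical.choose (key_aux hn X (Φ X) (herm X h) (hcoax X h)) k else 0, ?_⟩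
      intro X hX
      simp only [dif_pos hX]
      exact Classical.choose_spec (key_aux hn X (Φ X) (herm X hX) (hcoax X hX))
  · rintro ⟨γ, hγ⟩ X hX v ⟨hv0, μ, hμ⟩
    refine ⟨hv0, ∑ k : Fin n, γ k X * μ ^ (k : ℕ), ?_⟩
    rw [hγ X hX, sum_mulVec_aux]
    rw [Finset.sum_smul]
    congr 1
    ext k
    rw [Matrix.smul_mulVec, pow_mulVec_aux X hμ, smul_smul]
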